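/- Let l ≥ 0 be an integer and let β₁,…,β_l ∈ ℂ satisfy |β_i| ≥ 1 for all i. Then for every integer d ≥ 1, limsup_{n→∞} Re(β₁^{dn} + ⋯ + β_l^{dn}) ≥ l. -/

import Mathlib

lemma pow_re' (z : ℂ) (m : ℕ) : (z ^ m).re = ‖z‖^m * Real.cos (m * z.arg) := by
  conv_lhs => rw [← Complex.norm_mul_exp_arg_mul_I z]
  rw [mul_pow, ← Complex.exp_nat_mul,
    show (m:ℂ) * (z.arg * Complex.I) = ((m * z.arg : ℝ) : ℂ) * Complex.I by push_cast; ring,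
    ← Complex.ofReal_pow, Complex.re_ofReal_mul, Complex.exp_ofReal_mul_I_re]


lemma box_close {K : ℕ} (hK : 0 < K) {a b : ℝ}
    (h : ⌊Int.fract a * K⌋₊ = ⌊Int.fract b * K⌋₊) :
    |Int.fract b - Int.fract a| < 1 / K := by
  have hKR : (0:ℝ) < K := by exact_mod_cast hK
  have ha0 : (0:ℝ) ≤ Int.fract a * K := mul_nonneg (Int.fract_nonneg _) hKR.le
  have hb0 : (0:ℝ) ≤ Int.fract b * K := mul_nonneg (Int.fract_nonneg _) hKR.le
  have h1 : (⌊Int.fract a * K⌋₊ : ℝ) ≤ Int.fract a * K := Nat.floor_le ha0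
  have h2 : Int.fract a * K < ⌊Int.fract a * K⌋₊ + 1 := Nat.lt_floor_add_one _
  have h3 : (⌊Int.fract b * K⌋₊ : ℝ) ≤ Int.fract b * K := Nat.floor_le hb0
  have h4 : Int.fract b * K < ⌊Int.fract b * K⌋₊ + 1 := Nat.lt_floor_add_one _
  rw [h] at h1 h2
  have h5 : (1 / (K:ℝ)) * K = 1 := div_mul_cancel₀ 1 (ne_of_gt hKR)
  rw [abs_lt]
  constructor <;> nlinarith [h1, h2, h3, h4, h5]

lemma recur (l : ℕ) (γ : Fin l → ℝ) {δ : ℝ} (hδ : 0 < δ) (M : ℕ) (hM : 1 ≤ M) :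
    ∃ n : ℕ, M ≤ n ∧ ∀ i, ∃ k : ℤ, |(n : ℝ) * γ i - k| < δ := by
  set K : ℕ := ⌈1/δ⌉₊ with hKdef
  have hK : 0 < K := Nat.ceil_pos.2 (by positivity)
  have hKR : (0:ℝ) < K := by exact_mod_cast hK
  have hKδ : 1 / (K:ℝ) ≤ δ := by
    rw [div_le_iff₀ hKR]
    have h : 1/δ ≤ (K:ℝ) := Nat.le_ceil _
    calc (1:ℝ) = δ * (1/δ) := by field_simp
    _ ≤ δ * K := by nlinarith
  have hfr : ∀ (j : ℕ) (i : Fin l), ⌊Int.fract ((j*M : ℕ) * γ i) * K⌋₊ < K := by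
    intro j i
    have h1 := Int.fract_lt_one ((j*M : ℕ) * γ i)
    have h0 := Int.fract_nonneg ((j*M : ℕ) * γ i)
    rw [Nat.floor_lt (mul_nonneg h0 hKR.le)]
    nlinarith
  set f : ℕ → (Fin l → Fin K) := fun j i => ⟨_, hfr j i⟩ with hf
  have hcard : (Finset.univ : Finset (Fin l → Fin K)).card < (Finset.range (K^l + 1)).card := by
    simp [Finset.card_univ]
  obtain ⟨j₁, -, j₂, -, hne, heq⟩ :=
    Finset.exists_ne_map_eq_of_card_lt_of_maps_to hcard (fun x _ => Finset.mem_univ (f x))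
  wlog h12 : j₁ < j₂ generalizing j₁ j₂
  · exact this j₂ j₁ hne.symm heq.symm (by omega)
  refine ⟨(j₂ - j₁) * M, Nat.le_mul_of_pos_left M (by omega), fun i => ?_⟩
  have hbox : ⌊Int.fract (((j₁*M : ℕ):ℝ) * γ i) * K⌋₊ = ⌊Int.fract (((j₂*M : ℕ):ℝ) * γ i) * K⌋₊ :=
    congrArg Fin.val (congrFun heq i)
  set a : ℝ := ((j₁*M : ℕ) : ℝ) * γ i with hadef
  set b : ℝ := ((j₂*M : ℕ) : ℝ) * γ i with hbdef
  refine ⟨⌊b⌋ - ⌊a⌋, ?_⟩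
  have hcl := box_close hK hbox
  have hfa : Int.fract a = a - ⌊a⌋ := (Int.self_sub_floor a).symm
  have hfb : Int.fract b = b - ⌊b⌋ := (Int.self_sub_floor b).symm
  have hcast : (((j₂ - j₁) * M : ℕ) : ℝ) * γ i = b - a := by
    rw [hadef, hbdef]
    push_cast [Nat.cast_sub h12.le]
    ring
  rw [hcast]
  calc |b - a - ((⌊b⌋ - ⌊a⌋ : ℤ) : ℝ)| = |Int.fract b - Int.fract a| := by
        rw [hfa, hfb]; push_cast; ring_nf
  _ < 1 / K := hcl
  _ ≤ δ := hKδ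


/-- Lemma 2.11 (real amplification): if `|βᵢ| ≥ 1` for all `i`, then for every
`d ≥ 1` the limsup (in `EReal`, as `n → ∞`) of `Re(β₁^{dn} + ⋯ + β_l^{dn})`
is at least `l`. -/
theorem stmt8 (l : ℕ) (β : Fin l → ℂ) (hβ : ∀ i, 1 ≤ ‖β i‖)
    (d : ℕ) (hd : 1 ≤ d) :
    (l : EReal) ≤
      Filter.limsup (fun n : ℕ => (((∑ i, β i ^ (d * n)).re : ℝ) : EReal))
        Filter.atTop := by
  rcases Nat.eq_zero_or_pos l with rfl | hl
  · simp [Filter.limsup_const]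
  have hlR : (0:ℝ) < l := by exact_mod_cast hl
  have pi_pos := Real.pi_pos
  have key : ∀ ε : ℝ, 0 < ε →
      ∃ᶠ n in Filter.atTop, (l:ℝ) - ε ≤ (∑ i, β i ^ (d * n)).re := by
    intro ε hε
    obtain ⟨δ, hδpos, hδ1, hδ2⟩ : ∃ δ : ℝ, 0 < δ ∧ δ ≤ 1 ∧ δ^2 ≤ 2*ε/l := by
      refine ⟨min 1 (Real.sqrt (2*ε/l)), lt_min one_pos (Real.sqrt_pos.2 (by positivity)),
        min_le_left _ _, ?_⟩
      calc (min 1 (Real.sqrt (2*ε/l)))^2 ≤ (Real.sqrt (2*ε/l))^2 := by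
            have h1 := min_le_right 1 (Real.sqrt (2*ε/l))
            have h2 := lt_min one_pos (Real.sqrt_pos.2 (show (0:ℝ) < 2*ε/l by positivity))
            nlinarith
      _ = 2*ε/l := Real.sq_sqrt (by positivity)
    have hεl : δ^2/2 ≤ ε/l := by
      have h2 : 2*ε/(l:ℝ) = 2*(ε/l) := by ring
      linarith [hδ2, h2.symm.le]
    have hδsq : δ^2 ≤ 1 := by nlinarith
    rw [Filter.frequently_atTop]
    intro N
    obtain ⟨n, hn, hall⟩ := recur l (fun i => (d : ℝ) * (β i).arg / (2*Real.pi))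
      (show 0 < δ/(2*Real.pi) by positivity) (max N 1) (le_max_right _ _)
    refine ⟨n, le_trans (le_max_left N 1) hn, ?_⟩
    have hterm : ∀ i, 1 - ε/l ≤ (β i ^ (d * n)).re := by
      intro i
      obtain ⟨k, hk⟩ := hall i
      have h2π : (0:ℝ) < 2*Real.pi := by positivity
      have heq : (n:ℝ) * ((d : ℝ) * (β i).arg / (2*Real.pi)) - k
          = ((↑(d*n):ℝ) * (β i).arg - k * (2*Real.pi))/(2*Real.pi) := by
        push_cast
        field_simp
      rw [heq, abs_div, abs_of_pos h2π, div_lt_div_iff_of_pos_right h2π] at hk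
      obtain ⟨y, hy⟩ : ∃ y : ℝ, y = (↑(d*n):ℝ) * (β i).arg - ↑k * (2*Real.pi) := ⟨_, rfl⟩
      rw [← hy] at hk
      have hper : Real.cos ((↑(d*n):ℝ) * (β i).arg) = Real.cos y := by
        rw [hy]; exact (Real.cos_sub_int_mul_two_pi _ k).symm
      have hb := Real.one_sub_sq_div_two_le_cos (x := y)
      have hy2 : y^2 < δ^2 := by
        have := abs_lt.1 hk
        nlinarith [this.1, this.2, hδpos]
      have hcos1 : 1 - ε/l ≤ Real.cos ((↑(d*n):ℝ) * (β i).arg) := by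
        rw [hper]; linarith
      have hcos0 : 0 ≤ Real.cos ((↑(d*n):ℝ) * (β i).arg) := by
        rw [hper]; linarith
      have hr : (1:ℝ) ≤ ‖β i‖^(d*n) := one_le_pow₀ (hβ i)
      rw [pow_re' (β i) (d*n)]
      calc 1 - ε/l ≤ Real.cos ((↑(d*n):ℝ) * (β i).arg) := hcos1
      _ = 1 * Real.cos ((↑(d*n):ℝ) * (β i).arg) := (one_mul _).symm
      _ ≤ ‖β i‖^(d*n) * Real.cos ((↑(d*n):ℝ) * (β i).arg) :=
          mul_le_mul_of_nonneg_right hr hcos0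
    have hsum : (l:ℝ) * (1 - ε/l) ≤ (∑ i, β i ^ (d * n)).re := by
      rw [Complex.re_sum]
      calc (l:ℝ) * (1 - ε/l) = ∑ _i : Fin l, (1 - ε/l) := by
            rw [Finset.sum_const, Finset.card_univ, Fintype.card_fin, nsmul_eq_mul]
      _ ≤ ∑ i, (β i ^ (d * n)).re := Finset.sum_le_sum (fun i _ => hterm i)
    have heq : (l:ℝ) * (1 - ε/l) = l - ε := by field_simp
    linarith [hsum, heq.symm.le]
  have key2 : ∀ ε : ℝ, 0 < ε → (((l:ℝ) - ε : ℝ) : EReal) ≤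
      Filter.limsup (fun n : ℕ => (((∑ i, β i ^ (d * n)).re : ℝ) : EReal)) Filter.atTop := by
    intro ε hε
    apply Filter.le_limsup_of_frequently_le
    · exact (key ε hε).mono (fun n hn => by exact_mod_cast hn)
    · exact ⟨⊤, Filter.eventually_map.2 (Filter.Eventually.of_forall fun _ => le_top)⟩
  by_contra hcon
  push_neg at hcon
  obtain ⟨r, hLr, hrl⟩ := EReal.exists_between_coe_real hcon
  have hrl' : r < (l:ℝ) := by
    have h1 : ((l:ℕ):EReal) = (((l:ℕ):ℝ):EReal) := by norm_cast
    rw [h1] at hrl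
    exact_mod_cast hrl
  have := key2 ((l:ℝ) - r) (by linarith)
  rw [show ((l:ℝ) - ((l:ℝ) - r) : ℝ) = r by ring] at this
  exact absurd (lt_of_le_of_lt this hLr) (lt_irrefl _)
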